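/- Let f be standard self-concordant and strictly convex with positive-definite Hessian, let x ∈ ℝⁿ, d ≠ 0, and δ = √(dᵀ∇²f(x)d). Then for all 0 ≤ t < 1/δ: f(x+td) ≤ f(x) + t∇f(x)ᵀd - δt - log(1 - δt). -/

import Mathlib

open Real
open scoped RealInnerProductSpace

section Aux

variable {n : ℕ} {f : EuclideanSpace ℝ (Fin n) → ℝ}

private lemma line_hasDerivAt (x d : EuclideanSpace ℝ (Fin n)) (t : ℝ) :
    HasDerivAt (fun s : ℝ => x + s • d) d t := by
  simpa using ((hasDerivAt_id t).smul_const d).const_add x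

private lemma hasDerivAt_g (hf : ContDiff ℝ 3 f) (x d : EuclideanSpace ℝ (Fin n)) (t : ℝ) :
    HasDerivAt (fun s : ℝ => f (x + s • d)) (fderiv ℝ f (x + t • d) d) t :=
  ((hf.differentiable (by norm_num)).differentiableAt.hasFDerivAt).comp_hasDerivAt t
    (line_hasDerivAt x d t)

private lemma hasDerivAt_g1 (hf : ContDiff ℝ 3 f) (x d : EuclideanSpace ℝ (Fin n)) (t : ℝ) :
    HasDerivAt (fun s : ℝ => fderiv ℝ f (x + s • d) d)
      (iteratedFDeriv ℝ 2 f (x + t • d) ![d, d]) t := by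
  have h1 : HasDerivAt (fun s : ℝ => fderiv ℝ f (x + s • d))
      (fderiv ℝ (fderiv ℝ f) (x + t • d) d) t :=
    (((hf.fderiv_right (m := 2) (by norm_num)).differentiable
      (by norm_num)).differentiableAt.hasFDerivAt).comp_hasDerivAt
      t (line_hasDerivAt x d t)
  have h2 := (ContinuousLinearMap.apply ℝ ℝ d).hasFDerivAt.comp_hasDerivAt t h1
  simpa [iteratedFDeriv_two_apply, Function.comp_def] using h2

private lemma hasDerivAt_g2 (hf : ContDiff ℝ 3 f) (x d : EuclideanSpace ℝ (Fin n)) (t : ℝ) :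
    HasDerivAt (fun s : ℝ => iteratedFDeriv ℝ 2 f (x + s • d) ![d, d])
      (iteratedFDeriv ℝ 3 f (x + t • d) ![d, d, d]) t := by
  have hF2 : ContDiff ℝ 1 (fderiv ℝ (fderiv ℝ f)) :=
    (hf.fderiv_right (m := 2) (by norm_num)).fderiv_right (m := 1) (by norm_num)
  have h1 : HasDerivAt (fun s : ℝ => fderiv ℝ (fderiv ℝ f) (x + s • d))
      (fderiv ℝ (fderiv ℝ (fderiv ℝ f)) (x + t • d) d) t :=
    ((hF2.differentiable (by norm_num)).differentiableAt.hasFDerivAt).comp_hasDerivAt t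
      (line_hasDerivAt x d t)
  have h2 := HasFDerivAt.comp_hasDerivAt (l := (ContinuousLinearMap.apply ℝ
    (EuclideanSpace ℝ (Fin n) →L[ℝ] ℝ) d)) t (ContinuousLinearMap.apply ℝ
    (EuclideanSpace ℝ (Fin n) →L[ℝ] ℝ) d).hasFDerivAt h1
  have h3 := (ContinuousLinearMap.apply ℝ ℝ d).hasFDerivAt.comp_hasDerivAt t h2
  have e2 : ∀ z : EuclideanSpace ℝ (Fin n), iteratedFDeriv ℝ 2 f z ![d, d]
      = fderiv ℝ (fderiv ℝ f) z d d := fun z => by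
    simp [iteratedFDeriv_two_apply]
  have e3 : iteratedFDeriv ℝ 3 f (x + t • d) ![d, d, d]
      = fderiv ℝ (fderiv ℝ (fderiv ℝ f)) (x + t • d) d d d := by
    have h := iteratedFDeriv_succ_apply_right (𝕜 := ℝ) (n := 2) (f := f)
      (x := x + t • d) ![d, d, d]
    rw [h, iteratedFDeriv_two_apply]
    congr 1
  simp only [e2, e3]
  simpa [Function.comp_def] using h3

end Aux

theorem self_concordant_upper_bound {n : ℕ}
    (f : EuclideanSpace ℝ (Fin n) → ℝ) (hf : ContDiff ℝ 3 f)
    (hsc : ∀ (x h : EuclideanSpace ℝ (Fin n)),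
      |iteratedFDeriv ℝ 3 f x ![h, h, h]| ≤
        2 * (iteratedFDeriv ℝ 2 f x ![h, h]) ^ ((3 : ℝ) / 2))
    (hconv : ∀ (x h : EuclideanSpace ℝ (Fin n)), h ≠ 0 →
      0 < iteratedFDeriv ℝ 2 f x ![h, h])
    (x d : EuclideanSpace ℝ (Fin n)) (hd : d ≠ 0) (δ : ℝ)
    (hδ : δ = Real.sqrt (iteratedFDeriv ℝ 2 f x ![d, d])) :
    ∀ t : ℝ, 0 ≤ t → t < 1 / δ →
      f (x + t • d) ≤ f x + t * ⟪gradient f x, d⟫ - δ * t - Real.log (1 - δ * t) := by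
  intro t ht0 ht1
  set g1 : ℝ → ℝ := fun s => fderiv ℝ f (x + s • d) d with hg1def
  set g2 : ℝ → ℝ := fun s => iteratedFDeriv ℝ 2 f (x + s • d) ![d, d] with hg2def
  set g3 : ℝ → ℝ := fun s => iteratedFDeriv ℝ 3 f (x + s • d) ![d, d, d] with hg3def
  have hg2pos : ∀ s : ℝ, 0 < g2 s := fun s => hconv _ d hd
  have hg20 : g2 0 = iteratedFDeriv ℝ 2 f x ![d, d] := by simp [hg2def]
  have hδ' : δ = Real.sqrt (g2 0) := by rw [hg20, hδ]
  have hδpos : 0 < δ := by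
    rw [hδ']; exact Real.sqrt_pos.mpr (hg2pos 0)
  have htδ : t < δ⁻¹ := by rwa [one_div] at ht1
  have hA : ∀ s : ℝ, 0 < Real.sqrt (g2 s) := fun s => Real.sqrt_pos.mpr (hg2pos s)
  have hg1At : ∀ s : ℝ, HasDerivAt g1 (g2 s) s := fun s => hasDerivAt_g1 hf x d s
  have hg2At : ∀ s : ℝ, HasDerivAt g2 (g3 s) s := fun s => hasDerivAt_g2 hf x d s
  have hg1cont : Continuous g1 := by
    have : Differentiable ℝ g1 := fun s => (hg1At s).differentiableAt
    exact this.continuous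
  -- step 1 : lower bound on ψ = (√ ∘ g2)⁻¹
  set ψ : ℝ → ℝ := fun s => (Real.sqrt (g2 s))⁻¹ with hψdef
  have hsqrtAt : ∀ s : ℝ, HasDerivAt (fun u => Real.sqrt (g2 u))
      (1 / (2 * Real.sqrt (g2 s)) * g3 s) s := fun s =>
    (Real.hasDerivAt_sqrt (ne_of_gt (hg2pos s))).comp s (hg2At s)
  have hψAt : ∀ s : ℝ, HasDerivAt ψ
      (-(1 / (2 * Real.sqrt (g2 s)) * g3 s) / (Real.sqrt (g2 s)) ^ 2) s := fun s =>
    (hsqrtAt s).inv (ne_of_gt (hA s))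
  have key1 : ∀ s : ℝ, 0 ≤ s → δ⁻¹ - s ≤ ψ s := by
    intro s hs
    have hmono : Monotone (fun u => ψ u + u) := by
      apply monotone_of_deriv_nonneg
      · exact fun u => ((hψAt u).add (hasDerivAt_id' (x := u))).differentiableAt
      · intro u
        rw [HasDerivAt.deriv (f := fun u => ψ u + u) ((hψAt u).add (hasDerivAt_id' (x := u)))]
        set A := Real.sqrt (g2 u) with hAdef
        have hApos : 0 < A := hA u
        have hAsq : A ^ 2 = g2 u := Real.sq_sqrt (le_of_lt (hg2pos u))
        have hg3le : g3 u ≤ 2 * (g2 u * A) := by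
          have h2 : (g2 u) ^ ((3 : ℝ) / 2) = g2 u * A := by
            rw [show (3 : ℝ) / 2 = 1 + 1 / 2 by norm_num,
              Real.rpow_add (hg2pos u), Real.rpow_one, hAdef, Real.sqrt_eq_rpow]
          calc g3 u ≤ |g3 u| := le_abs_self _
            _ ≤ 2 * (g2 u) ^ ((3 : ℝ) / 2) := hsc (x + u • d) d
            _ = 2 * (g2 u * A) := by rw [h2]
        have hfrac : 1 / (2 * A) * g3 u / A ^ 2 ≤ 1 := by
          rw [div_le_one (by positivity)]
          calc 1 / (2 * A) * g3 u ≤ 1 / (2 * A) * (2 * (g2 u * A)) := by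
                exact mul_le_mul_of_nonneg_left hg3le (by positivity)
            _ = g2 u := by field_simp
            _ = A ^ 2 := hAsq.symm
        have heq : -(1 / (2 * A) * g3 u) / A ^ 2 = -(1 / (2 * A) * g3 u / A ^ 2) := by
          ring
        rw [heq]
        linarith
    have hψ0 : ψ 0 = δ⁻¹ := by simp only [hψdef]; rw [← hδ']
    have h2 := hmono hs
    simp only [add_zero] at h2
    rw [hψ0] at h2
    linarith
  -- step 2 : pointwise bound on g2
  have key2 : ∀ s : ℝ, 0 ≤ s → s ≤ t → g2 s ≤ ((δ⁻¹ - s) ^ 2)⁻¹ := by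
    intro s hs hst
    have hpos : 0 < δ⁻¹ - s := by linarith
    have h1 : δ⁻¹ - s ≤ (Real.sqrt (g2 s))⁻¹ := key1 s hs
    have h2 : Real.sqrt (g2 s) ≤ (δ⁻¹ - s)⁻¹ := by
      rw [← inv_inv (Real.sqrt (g2 s))]
      exact inv_anti₀ hpos h1
    rw [← inv_pow]
    calc g2 s = (Real.sqrt (g2 s)) ^ 2 := (Real.sq_sqrt (le_of_lt (hg2pos s))).symm
      _ ≤ ((δ⁻¹ - s)⁻¹) ^ 2 := pow_le_pow_left₀ (le_of_lt (hA s)) h2 2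
  -- derivative of u ↦ (δ⁻¹ - u)⁻¹
  have hinvAt : ∀ s : ℝ, s ≠ δ⁻¹ → HasDerivAt (fun u : ℝ => (δ⁻¹ - u)⁻¹)
      (((δ⁻¹ - s) ^ 2)⁻¹) s := by
    intro s hs
    have h1 : HasDerivAt (fun u : ℝ => δ⁻¹ - u) (-1) s := by
      simpa using (hasDerivAt_id s).const_sub δ⁻¹
    have h2 := h1.inv (sub_ne_zero.mpr (Ne.symm hs))
    rw [neg_neg, one_div] at h2
    exact h2
  -- step 3 : bound on g1
  have key3 : ∀ s : ℝ, 0 ≤ s → s ≤ t → g1 s ≤ g1 0 + (δ⁻¹ - s)⁻¹ - δ := by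
    intro s hs hst
    have hpAt : ∀ u : ℝ, u < δ⁻¹ →
        HasDerivAt (fun v : ℝ => g1 0 + (δ⁻¹ - v)⁻¹ - δ - g1 v)
          (((δ⁻¹ - u) ^ 2)⁻¹ - g2 u) u := fun u hu =>
      (((hinvAt u (ne_of_lt hu)).const_add (g1 0)).sub_const δ).sub (hg1At u)
    have hmono : MonotoneOn (fun v : ℝ => g1 0 + (δ⁻¹ - v)⁻¹ - δ - g1 v) (Set.Icc 0 t) := by
      apply monotoneOn_of_deriv_nonneg (convex_Icc 0 t)
      · have hcont_inv : ContinuousOn (fun u : ℝ => (δ⁻¹ - u)⁻¹) (Set.Icc 0 t) := by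
          apply ContinuousOn.inv₀ (continuousOn_const.sub continuousOn_id)
          intro u hu
          have : u < δ⁻¹ := lt_of_le_of_lt hu.2 htδ
          exact ne_of_gt (show (0:ℝ) < δ⁻¹ - u by linarith)
        exact ((continuousOn_const.add hcont_inv).sub continuousOn_const).sub
          hg1cont.continuousOn
      · intro u hu
        rw [interior_Icc] at hu
        have hult : u < δ⁻¹ := lt_trans hu.2 htδ
        exact (hpAt u hult).differentiableAt.differentiableWithinAt
      · intro u hu
        rw [interior_Icc] at hu
        have hult : u < δ⁻¹ := lt_trans hu.2 htδ
        rw [(hpAt u hult).deriv]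
        have := key2 u (le_of_lt hu.1) (le_of_lt hu.2)
        linarith
    have h := hmono (Set.mem_Icc.mpr ⟨le_refl 0, ht0⟩) (Set.mem_Icc.mpr ⟨hs, hst⟩) hs
    simp only [sub_zero, inv_inv] at h
    linarith
  -- step 4 : integrate once more
  have hlin : ∀ u : ℝ, HasDerivAt (fun v : ℝ => 1 - δ * v) (-δ) u := by
    intro u
    simpa using ((hasDerivAt_id u).const_mul δ).const_sub 1
  have hloggt : ∀ u : ℝ, 0 ≤ u → u ≤ t → 0 < 1 - δ * u := by
    intro u hu hut
    have h1 : δ * u ≤ δ * t := mul_le_mul_of_nonneg_left hut (le_of_lt hδpos)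
    have h2 : t * δ < 1 := (lt_div_iff₀ hδpos).mp ht1
    nlinarith
  have hqAt : ∀ u : ℝ, 1 - δ * u ≠ 0 →
      HasDerivAt (fun v : ℝ => f x + v * g1 0 - δ * v - Real.log (1 - δ * v) - f (x + v • d))
        (g1 0 - δ - (1 - δ * u)⁻¹ * (-δ) - g1 u) u := by
    intro u hu
    have hlog : HasDerivAt (fun v : ℝ => Real.log (1 - δ * v)) ((1 - δ * u)⁻¹ * (-δ)) u :=
      by have := (Real.hasDerivAt_log hu).comp u (hlin u); exact this
    have h1 : HasDerivAt (fun v : ℝ => f x + v * g1 0) (g1 0) u := by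
      simpa using ((hasDerivAt_id u).mul_const (g1 0)).const_add (f x)
    have h2 : HasDerivAt (fun v : ℝ => δ * v) δ u := by
      simpa using (hasDerivAt_id u).const_mul δ
    exact ((h1.sub h2).sub hlog).sub (hasDerivAt_g hf x d u)
  have hqmono : MonotoneOn
      (fun v : ℝ => f x + v * g1 0 - δ * v - Real.log (1 - δ * v) - f (x + v • d))
      (Set.Icc 0 t) := by
    apply monotoneOn_of_deriv_nonneg (convex_Icc 0 t)
    · have hgc : Continuous (fun v : ℝ => f (x + v • d)) :=
        hf.continuous.comp (continuous_const.add (continuous_id.smul continuous_const))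
      have hlogc : ContinuousOn (fun v : ℝ => Real.log (1 - δ * v)) (Set.Icc 0 t) := by
        apply ContinuousOn.log (continuousOn_const.sub (continuousOn_const.mul continuousOn_id))
        intro u hu
        exact ne_of_gt (hloggt u hu.1 hu.2)
      exact (((continuousOn_const.add (continuousOn_id.mul continuousOn_const)).sub
        (continuousOn_const.mul continuousOn_id)).sub hlogc).sub hgc.continuousOn
    · intro u hu
      rw [interior_Icc] at hu
      exact (hqAt u (ne_of_gt (hloggt u (le_of_lt hu.1) (le_of_lt hu.2)))).differentiableAt.differentiableWithinAt
    · intro u hu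
      rw [interior_Icc] at hu
      have h0 : 0 < 1 - δ * u := hloggt u (le_of_lt hu.1) (le_of_lt hu.2)
      rw [(hqAt u (ne_of_gt h0)).deriv]
      have hult : u < δ⁻¹ := lt_trans hu.2 htδ
      have hkey := key3 u (le_of_lt hu.1) (le_of_lt hu.2)
      have heq : (δ⁻¹ - u)⁻¹ = (1 - δ * u)⁻¹ * δ := by
        have h : δ⁻¹ - u = (1 - δ * u) / δ := by field_simp
        rw [h, inv_div, div_eq_mul_inv, mul_comm]
      rw [heq] at hkey
      linarith
  have h := hqmono (Set.mem_Icc.mpr ⟨le_refl 0, ht0⟩) (Set.mem_Icc.mpr ⟨ht0, le_refl t⟩) ht0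
  simp only [zero_mul, mul_zero, zero_smul, add_zero, sub_zero, Real.log_one] at h
  have hgrad : ⟪gradient f x, d⟫ = g1 0 := by
    have : g1 0 = fderiv ℝ f x d := by simp [hg1def]
    rw [this, gradient, InnerProductSpace.toDual_symm_apply]
  rw [hgrad]
  linarith
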